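/- Let p be a prime and k > j ≥ 1 integers. All elements of the set {C(k-j, 1), C(k-j+1, 2), ..., C(k-j+t-1, t), ..., C(k-1, j)} of binomial coefficients are divisible by p if and only if j < p^{a(k-j)}, where p^{a(k-j)} is the exact power of p dividing k-j. -/

import Mathlib

open Nat Finset in
lemma aux_dvd_choose_iff (p m t : ℕ) (hp : p.Prime) :
    p ∣ Nat.choose (m + t) t ↔ ∃ i, 1 ≤ i ∧ p ^ i ≤ t % p ^ i + m % p ^ i := by
  rw [← emultiplicity_ne_zero,
    hp.emultiplicity_choose' (lt_add_one (Nat.log p (m + t)))]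
  rw [Ne, Nat.cast_eq_zero, Finset.card_eq_zero, ← Ne, ← Finset.nonempty_iff_ne_empty]
  constructor
  · rintro ⟨i, hi⟩
    simp only [Finset.mem_filter, Finset.mem_Ico] at hi
    exact ⟨i, hi.1.1, hi.2⟩
  · rintro ⟨i, hi1, hi2⟩
    refine ⟨i, ?_⟩
    simp only [Finset.mem_filter, Finset.mem_Ico]
    have hle : p ^ i ≤ m + t := by
      have h1 := Nat.mod_le t (p ^ i)
      have h2 := Nat.mod_le m (p ^ i)
      omega
    have hmt : m + t ≠ 0 := by
      have := Nat.one_lt_two_pow_iff.mpr (by omega : i ≠ 0)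
      have h2 : 2 ^ i ≤ p ^ i := Nat.pow_le_pow_left hp.two_le i
      omega
    have := (Nat.le_log_iff_pow_le hp.one_lt hmt).mpr hle
    exact ⟨⟨hi1, by omega⟩, hi2⟩

lemma aux_mod_pred (d n : ℕ) (hd : d ∣ n) (hn : 1 ≤ n) (hd1 : 1 ≤ d) :
    (n - 1) % d = d - 1 := by
  obtain ⟨q, rfl⟩ := hd
  have hq : 1 ≤ q := by
    rcases Nat.eq_zero_or_pos q with h | h
    · subst h; simp at hn
    · exact h
  rcases Nat.exists_eq_add_of_le hq with ⟨q', rfl⟩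
  have h1 : d * (1 + q') = (d - 1) + q' * d + 1 := by
    have : d * (1 + q') = d + q' * d := by ring
    omega
  rw [h1]
  simp only [Nat.add_sub_cancel]
  rw [Nat.add_mul_mod_self_right, Nat.mod_eq_of_lt (by omega)]

theorem stmt_0 (p k j : ℕ) (hp : p.Prime) (hj : 1 ≤ j) (hk : j < k) :
    (∀ t, 1 ≤ t → t ≤ j → p ∣ Nat.choose (k - j + t - 1) t) ↔
      j < p ^ (padicValNat p (k - j)) := by
  haveI := Fact.mk hp
  set n := k - j with hn
  have hn1 : 1 ≤ n := by omega
  set v := padicValNat p n with hv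
  have hpvn : p ^ v ∣ n := pow_padicValNat_dvd
  have hsucc : ¬ p ^ (v + 1) ∣ n := pow_succ_padicValNat_not_dvd (by omega)
  have hkey : ∀ t, 1 ≤ t → (k - j + t - 1) = (n - 1) + t := by intro t ht; omega
  constructor
  · -- all divisible → j < p^v ; contrapositive with t = p^v
    intro h
    by_contra hjv
    push_neg at hjv
    have hpv1 : 1 ≤ p ^ v := Nat.one_le_pow _ _ hp.pos
    have hd := h (p ^ v) hpv1 hjv
    rw [hkey _ hpv1, aux_dvd_choose_iff _ _ _ hp] at hd
    obtain ⟨i, hi1, hi2⟩ := hd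
    rcases le_or_gt i v with hiv | hiv
    · -- i ≤ v : p^v % p^i = 0 and (n-1) % p^i < p^i
      have h0 : p ^ v % p ^ i = 0 :=
        Nat.mod_eq_zero_of_dvd (pow_dvd_pow p hiv)
      rw [h0] at hi2
      have hlt : (n - 1) % p ^ i < p ^ i := Nat.mod_lt _ (pow_pos hp.pos i)
      omega
    · -- v < i
      have hpi1 : 1 ≤ p ^ i := Nat.one_le_pow _ _ hp.pos
      have hpvlt : p ^ v < p ^ i := Nat.pow_lt_pow_right hp.one_lt hiv
      have h0 : p ^ v % p ^ i = p ^ v := Nat.mod_eq_of_lt hpvlt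
      have hpvc : p ^ v ∣ n % p ^ i :=
        (Nat.dvd_mod_iff (pow_dvd_pow p (le_of_lt hiv))).mpr hpvn
      have hc0 : n % p ^ i ≠ 0 := by
        intro hz
        exact hsucc ((pow_dvd_pow p (by omega : v + 1 ≤ i)).trans (Nat.dvd_of_mod_eq_zero hz))
      obtain ⟨d, hd⟩ := hpvc
      have hd1 : 1 ≤ d := by
        rcases Nat.eq_zero_or_pos d with h | h
        · subst h; simp at hd; omega
        · exact h
      have hclt : n % p ^ i < p ^ i := Nat.mod_lt _ (by omega)
      -- (n-1) % p^i = n % p^i - 1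
      have hm1 : (n - 1) % p ^ i = n % p ^ i - 1 := by
        have h2 := Nat.div_add_mod n (p ^ i)
        have h3 : n - 1 = p ^ i * (n / p ^ i) + (n % p ^ i - 1) := by omega
        rw [h3, Nat.mul_comm, Nat.add_comm, Nat.add_mul_mod_self_right,
          Nat.mod_eq_of_lt (by omega)]
      rw [h0, hm1] at hi2
      -- d < p^(i-v) hence (d+1) p^v ≤ p^i
      have hpow : p ^ i = p ^ (i - v) * p ^ v := by
        rw [← pow_add]; congr 1; omega
      have hdlt : d < p ^ (i - v) := by
        by_contra hcon
        push_neg at hcon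
        have : p ^ (i - v) * p ^ v ≤ d * p ^ v := Nat.mul_le_mul_right _ hcon
        have hpv1 : 1 ≤ p ^ v := Nat.one_le_pow _ _ hp.pos
        rw [hd, Nat.mul_comm] at hclt
        omega
      have : (d + 1) * p ^ v ≤ p ^ (i - v) * p ^ v := Nat.mul_le_mul_right _ (by omega)
      have hring : (d + 1) * p ^ v = p ^ v * d + p ^ v := by ring
      omega
  · -- j < p^v → all divisible
    intro hjv t ht1 htj
    rw [hkey _ ht1, aux_dvd_choose_iff _ _ _ hp]
    have htv : t < p ^ v := lt_of_le_of_lt htj hjv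
    set w := padicValNat p t with hw
    have hwt : p ^ w ∣ t := pow_padicValNat_dvd
    have hwv : w < v := by
      by_contra hc
      push_neg at hc
      have : p ^ v ≤ t := Nat.le_of_dvd (by omega) ((pow_dvd_pow p hc).trans hwt)
      omega
    refine ⟨w + 1, by omega, ?_⟩
    have hnd : ¬ p ^ (w + 1) ∣ t := pow_succ_padicValNat_not_dvd (by omega)
    have hmod : t % p ^ (w + 1) ≠ 0 := fun hc => hnd (Nat.dvd_of_mod_eq_zero hc)
    have hdvd : p ^ (w + 1) ∣ n := (pow_dvd_pow p (by omega : w + 1 ≤ v)).trans hpvn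
    rw [aux_mod_pred _ _ hdvd hn1 (Nat.one_le_pow _ _ hp.pos)]
    have := Nat.one_le_pow (w + 1) p hp.pos
    omega
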